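/- Let (x_n) be any sequence of complex numbers satisfying x_{n+2} = −x_{n+1} + x_n. If n is a positive integer congruent to 2 modulo 4 with n ≥ 6, then x_0 + x_1 + ... + x_{n-1} = L_{n/2} · x_{n/2 − 2}, where L denotes the Lucas numbers. -/

import Mathlib

private lemma Qinv (L : ℕ → ℕ) (hL0 : L 0 = 2) (hL1 : L 1 = 1)
    (hL : ∀ n, L (n + 2) = L (n + 1) + L n)
    (x : ℕ → ℂ) (hx : ∀ n, x (n + 2) = -x (n + 1) + x n) :
    ∀ a, (L (a + 1) : ℂ) * x a + (L a : ℂ) * x (a + 1) = x 0 + 2 * x 1 := by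
  intro a
  induction a with
  | zero => rw [hL0, hL1]; push_cast; ring
  | succ b ih =>
    rw [hL b, hx b] at *
    push_cast at *
    linear_combination ih

private lemma Lswap (L : ℕ → ℕ) (hL0 : L 0 = 2) (hL1 : L 1 = 1)
    (hL : ∀ n, L (n + 2) = L (n + 1) + L n)
    (x : ℕ → ℂ) (hx : ∀ n, x (n + 2) = -x (n + 1) + x n) (a : ℕ) :
    (L (a + 2) : ℂ) * x a = (L a : ℂ) * x (a + 2) + (x 0 + 2 * x 1) := by
  have h := Qinv L hL0 hL1 hL x hx a
  rw [hL a, hx a]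
  push_cast
  linear_combination h

private lemma sum_aux (L : ℕ → ℕ) (hL0 : L 0 = 2) (hL1 : L 1 = 1)
    (hL : ∀ n, L (n + 2) = L (n + 1) + L n) :
    ∀ m, ∀ x : ℕ → ℂ, (∀ n, x (n + 2) = -x (n + 1) + x n) →
      (∑ k ∈ Finset.range (4 * m + 6), x k) = (L (2 * m + 3) : ℂ) * x (2 * m + 1) := by
  intro m
  induction m with
  | zero =>
    intro x hx
    have h2 := hx 0
    have h3 := hx 1
    have h4 := hx 2
    have h5 := hx 3
    have hl3 : L 3 = 4 := by rw [hL 1, hL 0, hL0, hL1]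
    simp only [Nat.mul_zero, Nat.zero_add, Finset.sum_range_succ, Finset.range_zero,
      Finset.sum_empty]
    norm_num [hl3, h2, h3, h4, h5]
    ring
  | succ b ih =>
    intro x hx
    have key : 4 * (b + 1) + 6 = 4 + (4 * b + 6) := by ring
    rw [key, Finset.sum_range_add]
    have hy : ∀ n, (fun k => x (4 + k)) (n + 2) = -(fun k => x (4 + k)) (n + 1) + (fun k => x (4 + k)) n := by
      intro n
      show x (4 + (n + 2)) = -x (4 + (n + 1)) + x (4 + n)
      rw [show 4 + (n + 2) = (4 + n) + 2 from by ring, show 4 + (n + 1) = (4 + n) + 1 from by ring]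
      exact hx (4 + n)
    have ihy := ih (fun k => x (4 + k)) hy
    have e1 : 4 + (2 * b + 1) = 2 * b + 5 := by ring
    rw [e1] at ihy
    have h2 := hx 0
    have h3 := hx 1
    have hsw := Lswap L hL0 hL1 hL x hx (2 * b + 3)
    have e2 : 2 * b + 3 + 2 = 2 * b + 5 := by ring
    rw [e2] at hsw
    have e3 : 2 * (b + 1) + 3 = 2 * b + 5 := by ring
    have e4 : 2 * (b + 1) + 1 = 2 * b + 3 := by ring
    rw [e3, e4, ihy]
    simp only [Finset.sum_range_succ, Finset.range_zero, Finset.sum_empty]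
    -- goal: 0 + x 0 + x 1 + x 2 + x 3 + L(2b+3) * x(2b+5) = L(2b+5) * x(2b+3)
    rw [show (3:ℕ) = 1 + 2 by rfl, hx 1, h2]
    linear_combination -hsw

theorem sum_general_neg_fib (L : ℕ → ℕ) (hL0 : L 0 = 2) (hL1 : L 1 = 1)
    (hL : ∀ n, L (n + 2) = L (n + 1) + L n)
    (x : ℕ → ℂ) (hx : ∀ n, x (n + 2) = -x (n + 1) + x n)
    (n : ℕ) (hn : 6 ≤ n) (hn4 : n % 4 = 2) :
    (∑ k ∈ Finset.range n, x k) = (L (n / 2) : ℂ) * x (n / 2 - 2) := by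
  obtain ⟨m, rfl⟩ : ∃ m, n = 4 * m + 6 := ⟨(n - 6) / 4, by omega⟩
  have h1 : (4 * m + 6) / 2 = 2 * m + 3 := by omega
  have h2 : (4 * m + 6) / 2 - 2 = 2 * m + 1 := by omega
  rw [h2, h1]
  exact sum_aux L hL0 hL1 hL m x hx
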